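/- Let u : ℝⁿ → ℝᵐ be a C² solution of the system Δu = ∇W(u), where W : ℝᵐ → ℝ is C¹. Define the stress-energy tensor T_{ij} = ∂u/∂x_i · ∂u/∂x_j − δ_{ij}((1/2)|∇u|² + W(u)). Then T is divergence-free: for each j, Σᵢ ∂T_{ij}/∂x_i = 0. -/

import Mathlib

open Filter Topology
open scoped RealInnerProductSpace

noncomputable def stressEnergy {n m : ℕ}
    (u : EuclideanSpace ℝ (Fin n) → EuclideanSpace ℝ (Fin m)) (W : EuclideanSpace ℝ (Fin m) → ℝ)
    (i j : Fin n) (x : EuclideanSpace ℝ (Fin n)) : ℝ :=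
  ⟪fderiv ℝ u x (EuclideanSpace.single i 1), fderiv ℝ u x (EuclideanSpace.single j 1)⟫ -
    (if i = j then (1 : ℝ) else 0) *
      ((1 / 2) * ∑ k, ‖fderiv ℝ u x (EuclideanSpace.single k 1)‖ ^ 2 + W (u x))

theorem stmt1 {n m : ℕ}
    (u : EuclideanSpace ℝ (Fin n) → EuclideanSpace ℝ (Fin m)) (W : EuclideanSpace ℝ (Fin m) → ℝ)
    (hu : ContDiff ℝ 2 u) (hW : ContDiff ℝ 1 W)
    (hsol : ∀ x, (∑ i, fderiv ℝ (fun y => fderiv ℝ u y (EuclideanSpace.single i 1)) x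
        (EuclideanSpace.single i 1)) = gradient W (u x)) :
    ∀ (j : Fin n) (x : EuclideanSpace ℝ (Fin n)),
      (∑ i, fderiv ℝ (stressEnergy u W i j) x (EuclideanSpace.single i 1)) = 0 := by
  intro j x
  classical
  set e : Fin n → EuclideanSpace ℝ (Fin n) := fun i => EuclideanSpace.single i 1 with he
  have hud : Differentiable ℝ u := hu.differentiable (by norm_num)
  have hfc : ContDiff ℝ 1 (fderiv ℝ u) := hu.fderiv_right (by norm_num)
  have hfd : Differentiable ℝ (fderiv ℝ u) := hfc.differentiable one_ne_zero
  set F₂ := fderiv ℝ (fderiv ℝ u) x with hF2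
  have hfx : HasFDerivAt (fderiv ℝ u) F₂ x := (hfd x).hasFDerivAt
  have hsymm : ∀ a b, F₂ a b = F₂ b a :=
    second_derivative_symmetric (fun y => (hud y).hasFDerivAt) hfx
  set G : Fin n → (EuclideanSpace ℝ (Fin n) →L[ℝ] EuclideanSpace ℝ (Fin m)) := fun i =>
    (ContinuousLinearMap.apply ℝ (EuclideanSpace ℝ (Fin m)) (e i)).comp F₂ with hG
  have hg : ∀ i : Fin n, HasFDerivAt (fun y => fderiv ℝ u y (e i)) (G i) x := fun i =>
    ((ContinuousLinearMap.apply ℝ (EuclideanSpace ℝ (Fin m)) (e i)).hasFDerivAt).comp x hfx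
  have hGapp : ∀ i v, G i v = F₂ v (e i) := fun i v => rfl
  -- derivative of W ∘ u
  have hWg : HasGradientAt W (gradient W (u x)) (u x) :=
    ((hW.differentiable one_ne_zero) (u x)).hasGradientAt
  have hWu : HasFDerivAt (fun y => W (u y))
      ((InnerProductSpace.toDual ℝ (EuclideanSpace ℝ (Fin m)) (gradient W (u x))).comp
        (fderiv ℝ u x)) x :=
    hWg.hasFDerivAt.comp x (hud x).hasFDerivAt
  -- pointwise computation of the divergence terms
  have key : ∀ i : Fin n, fderiv ℝ (stressEnergy u W i j) x (e i) =
      (⟪F₂ (e i) (e i), fderiv ℝ u x (e j)⟫ + ⟪fderiv ℝ u x (e i), F₂ (e i) (e j)⟫) -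
        (if i = j then (1 : ℝ) else 0) *
          ((1 / 2) * ∑ k, (⟪fderiv ℝ u x (e k), F₂ (e i) (e k)⟫ +
              ⟪F₂ (e i) (e k), fderiv ℝ u x (e k)⟫) +
            ⟪gradient W (u x), fderiv ℝ u x (e i)⟫) := by
    intro i
    have hEq : stressEnergy u W i j = fun y =>
        ⟪fderiv ℝ u y (e i), fderiv ℝ u y (e j)⟫ -
          (if i = j then (1 : ℝ) else 0) *
            ((1 / 2) * ∑ k, ⟪fderiv ℝ u y (e k), fderiv ℝ u y (e k)⟫ + W (u y)) := by
      funext y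
      simp only [stressEnergy, ← real_inner_self_eq_norm_sq, he]
    have h1 := (hg i).inner ℝ (hg j)
    have h2 : HasFDerivAt (fun y => ∑ k, ⟪fderiv ℝ u y (e k), fderiv ℝ u y (e k)⟫)
        (∑ k, (fderivInnerCLM ℝ (fderiv ℝ u x (e k), fderiv ℝ u x (e k))).comp
          ((G k).prod (G k))) x :=
      HasFDerivAt.fun_sum fun k _ => (hg k).inner ℝ (hg k)
    have htot := h1.sub (((h2.const_mul ((1:ℝ)/2)).add hWu).const_mul
      (if i = j then (1 : ℝ) else 0))
    rw [hEq, (show HasFDerivAt (fun y =>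
        ⟪fderiv ℝ u y (e i), fderiv ℝ u y (e j)⟫ -
          (if i = j then (1 : ℝ) else 0) *
            ((1 / 2) * ∑ k, ⟪fderiv ℝ u y (e k), fderiv ℝ u y (e k)⟫ + W (u y))) _ x
        from htot).fderiv]
    simp only [ContinuousLinearMap.sub_apply, ContinuousLinearMap.comp_apply,
      ContinuousLinearMap.smul_apply, ContinuousLinearMap.add_apply,
      ContinuousLinearMap.sum_apply, fderivInnerCLM_apply, ContinuousLinearMap.prod_apply,
      InnerProductSpace.toDual_apply_apply, smul_eq_mul, hGapp]
    split_ifs <;> ring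
  have hsol' : (∑ i, F₂ (e i) (e i)) = gradient W (u x) := by
    have := hsol x
    rw [← this]
    refine Finset.sum_congr rfl fun i _ => ?_
    rw [(hg i).fderiv]
    rfl
  calc (∑ i, fderiv ℝ (stressEnergy u W i j) x (e i))
      = (∑ i, (⟪F₂ (e i) (e i), fderiv ℝ u x (e j)⟫ + ⟪fderiv ℝ u x (e i), F₂ (e i) (e j)⟫)) -
        ∑ i, (if i = j then (1 : ℝ) else 0) *
          ((1 / 2) * ∑ k, (⟪fderiv ℝ u x (e k), F₂ (e i) (e k)⟫ +
              ⟪F₂ (e i) (e k), fderiv ℝ u x (e k)⟫) +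
            ⟪gradient W (u x), fderiv ℝ u x (e i)⟫) := by
        rw [← Finset.sum_sub_distrib]
        exact Finset.sum_congr rfl fun i _ => key i
    _ = 0 := by
        have hdelta : ∑ i, (if i = j then (1 : ℝ) else 0) *
            ((1 / 2) * ∑ k, (⟪fderiv ℝ u x (e k), F₂ (e i) (e k)⟫ +
                ⟪F₂ (e i) (e k), fderiv ℝ u x (e k)⟫) +
              ⟪gradient W (u x), fderiv ℝ u x (e i)⟫) =
            (1 / 2) * ∑ k, (⟪fderiv ℝ u x (e k), F₂ (e j) (e k)⟫ +
                ⟪F₂ (e j) (e k), fderiv ℝ u x (e k)⟫) +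
              ⟪gradient W (u x), fderiv ℝ u x (e j)⟫ := by
          rw [Finset.sum_eq_single j]
          · simp
          · intro b _ hb; simp [hb]
          · simp
        rw [hdelta, Finset.sum_add_distrib]
        have e1 : (∑ i, ⟪F₂ (e i) (e i), fderiv ℝ u x (e j)⟫) =
            ⟪gradient W (u x), fderiv ℝ u x (e j)⟫ := by
          rw [← sum_inner, hsol']
        have e2 : (∑ i, ⟪fderiv ℝ u x (e i), F₂ (e i) (e j)⟫) =
            ∑ i, ⟪fderiv ℝ u x (e i), F₂ (e j) (e i)⟫ :=
          Finset.sum_congr rfl fun i _ => by rw [hsymm]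
        have e3 : (∑ k, (⟪fderiv ℝ u x (e k), F₂ (e j) (e k)⟫ +
              ⟪F₂ (e j) (e k), fderiv ℝ u x (e k)⟫)) =
            2 * ∑ k, ⟪fderiv ℝ u x (e k), F₂ (e j) (e k)⟫ := by
          rw [Finset.mul_sum, Finset.sum_congr rfl fun k _ => ?_]
          rw [real_inner_comm (F₂ (e j) (e k))]; ring
        rw [e1, e2, e3]
        ring
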